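/- The normalized sinc function satisfies Σ over all integers q of sinc(q − x)² = 1 for every real x. -/

import Mathlib

noncomputable def nsinc (x : ℝ) : ℝ :=
  if x = 0 then 1 else Real.sin (Real.pi * x) / (Real.pi * x)

open MeasureTheory Complex Real AddCircle

/-- `Σ_{q ∈ ℤ} sinc(q − x)² = 1` for every real `x`. -/
theorem sum_sinc_sq_eq_one (x : ℝ) :
    ∑' q : ℤ, (nsinc ((q : ℝ) - x)) ^ 2 = 1 := by
  haveI : Fact ((0:ℝ) < 1) := ⟨zero_lt_one⟩
  set f : ℝ → ℂ := fun t => Complex.exp (2 * π * I * x * t) with hf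
  have hnorm : ∀ t : ℝ, ‖f t‖ = 1 := by
    intro t
    have : (2 * (π:ℂ) * I * x * t) = ((2 * π * x * t : ℝ) : ℂ) * I := by push_cast; ring
    rw [hf]; simp only [this, Complex.norm_exp_ofReal_mul_I]
  set g : AddCircle (1:ℝ) → ℂ := AddCircle.liftIoc 1 0 f with hg
  have hgmeas : Measurable g := by
    have h1 : Measurable fun y : AddCircle 1 => ((AddCircle.measurableEquivIoc 1 0) y : ℝ) :=
      measurable_subtype_coe.comp (AddCircle.measurableEquivIoc 1 0).measurable
    have h2 : Continuous f := by fun_prop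
    exact h2.measurable.comp h1
  have hgnorm : ∀ y, ‖g y‖ = 1 := fun y => hnorm _
  have hmem : MemLp g 2 haarAddCircle :=
    MemLp.of_bound hgmeas.aestronglyMeasurable 1
      (Filter.Eventually.of_forall fun y => (hgnorm y).le)
  set F : Lp ℂ 2 (haarAddCircle (T := 1)) := hmem.toLp g with hF
  have hFg : (F : AddCircle (1:ℝ) → ℂ) =ᵐ[haarAddCircle] g := hmem.coeFn_toLp
  have hR : (∫ t : AddCircle (1:ℝ), ‖(F : AddCircle (1:ℝ) → ℂ) t‖ ^ 2 ∂haarAddCircle) = 1 := by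
    rw [integral_congr_ae (hFg.mono fun y hy => by rw [hy])]
    simp [hgnorm]
  have hcoeff : ∀ n : ℤ, fourierCoeff (F : AddCircle (1:ℝ) → ℂ) n = fourierCoeff g n := by
    intro n
    exact integral_congr_ae (hFg.mono fun y hy => by simp only [hy])
  have key : ∀ n : ℤ, fourierCoeff g n
      = ∫ t in (0:ℝ)..1, Complex.exp ((2 * π * I * (x - n)) * t) := by
    intro n
    rw [hg, fourierCoeff_liftIoc_eq, fourierCoeffOn_eq_integral]
    have h0 : ∀ t : ℝ, fourier (-n) (t : AddCircle (0 + 1 - 0 : ℝ)) • f t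
        = Complex.exp ((2 * π * I * (x - n)) * t) := by
      intro t
      rw [fourier_coe_apply, hf, smul_eq_mul, ← Complex.exp_add]
      congr 1
      push_cast
      ring
    simp only [h0]
    norm_num
  have hterm : ∀ n : ℤ, ‖fourierCoeff g n‖ ^ 2 = nsinc ((n : ℝ) - x) ^ 2 := by
    intro n
    by_cases hx : x = (n : ℝ)
    · have : ∀ t : ℝ, Complex.exp ((2 * π * I * (x - n)) * t) = 1 := by
        intro t; rw [hx]; norm_num
      rw [key n]
      simp only [this]
      rw [intervalIntegral.integral_const]
      have : ((n : ℝ) - x) = 0 := by rw [hx]; ring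
      simp [this, nsinc]
    · set r : ℝ := x - n with hr
      have hrne : r ≠ 0 := sub_ne_zero.mpr hx
      have hc : (2 * (π:ℂ) * I * (x - n)) ≠ 0 := by
        have hxn : ((x:ℂ) - n) ≠ 0 := sub_ne_zero.mpr (by exact_mod_cast hx)
        exact mul_ne_zero (mul_ne_zero (mul_ne_zero two_ne_zero
          (Complex.ofReal_ne_zero.mpr Real.pi_ne_zero)) Complex.I_ne_zero) hxn
      rw [key n, integral_exp_mul_complex hc]
      simp only [Complex.ofReal_one, Complex.ofReal_zero]
      have harg : (2 * (π:ℂ) * I * (x - n)) = ((2 * π * r : ℝ) : ℂ) * I := by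
        rw [hr]; push_cast; ring
      have hexp : Complex.exp ((2 * (π:ℂ) * I * (x - n)) * 1)
          = (Real.cos (2 * π * r) : ℂ) + (Real.sin (2 * π * r) : ℂ) * I := by
        rw [mul_one, harg, Complex.exp_mul_I]
        push_cast
        ring
      rw [hexp]
      have hnum : ((Real.cos (2 * π * r) : ℂ) + (Real.sin (2 * π * r) : ℂ) * I
          - Complex.exp ((2 * (π:ℂ) * I * (x - n)) * 0))
          = ((Real.cos (2 * π * r) - 1 : ℝ) : ℂ) + ((Real.sin (2 * π * r) : ℝ) : ℂ) * I := by
        rw [mul_zero, Complex.exp_zero]; push_cast; ring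
      rw [hnum, harg]
      rw [norm_div, div_pow]
      have hN : ‖((Real.cos (2 * π * r) - 1 : ℝ) : ℂ) + ((Real.sin (2 * π * r) : ℝ) : ℂ) * I‖ ^ 2
          = (Real.cos (2 * π * r) - 1) ^ 2 + Real.sin (2 * π * r) ^ 2 := by
        rw [Complex.sq_norm, Complex.normSq_add_mul_I]
      have hD : ‖((2 * π * r : ℝ) : ℂ) * I‖ ^ 2 = (2 * π * r) ^ 2 := by
        rw [norm_mul, Complex.norm_I, mul_one,
          Complex.norm_real, Real.norm_eq_abs, _root_.sq_abs]
      rw [hN, hD]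
      have hns : nsinc ((n : ℝ) - x) = Real.sin (π * r) / (π * r) := by
        rw [nsinc, if_neg (by rw [hr] at *; intro h; exact hrne (by linarith))]
        have : ((n : ℝ) - x) = -r := by rw [hr]; ring
        rw [this, mul_neg, Real.sin_neg, neg_div_neg_eq]
      rw [hns]
      have h3 := Real.sin_sq_add_cos_sq (π * r)
      have hcos : Real.cos (2 * π * r) = 1 - 2 * Real.sin (π * r) ^ 2 := by
        have h2 : Real.cos (2 * (π * r)) = 2 * Real.cos (π * r) ^ 2 - 1 :=
          Real.cos_two_mul (π * r)
        rw [show 2 * π * r = 2 * (π * r) by ring]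
        linarith
      have hsin2 : Real.sin (2 * π * r) = 2 * Real.sin (π * r) * Real.cos (π * r) := by
        rw [show 2 * π * r = 2 * (π * r) by ring, Real.sin_two_mul]
      have hfinal : (Real.cos (2 * π * r) - 1) ^ 2 + Real.sin (2 * π * r) ^ 2
          = 4 * Real.sin (π * r) ^ 2 := by
        rw [hcos, hsin2]; nlinarith [h3]
      rw [hfinal, show (2 * π * r) ^ 2 = 4 * (π * r) ^ 2 by ring,
        mul_div_mul_left _ _ (by norm_num : (4:ℝ) ≠ 0), div_pow]
  have hP := tsum_sq_fourierCoeff F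
  rw [hR] at hP
  refine Eq.trans (tsum_congr fun n => ?_) hP
  rw [hcoeff n, hterm n]
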